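/- (Curvature of a connection relative to the Levi-Civita curvature.) Let L be a connection on Ω with torsion T and lowered curvature R, and let g be a metric on Ω with non-metricity Q. Define Γ^p_{ij} := (1/2) g^{pn}(∂_j g_{ni} + ∂_i g_{nj} − ∂_n g_{ij}), its curvature K_{jiq}^p := ∂_j Γ^p_{iq} − ∂_i Γ^p_{jq} + Γ^h_{iq} Γ^p_{jh} − Γ^h_{jq} Γ^p_{ih}, and K_{ijpl} := g_{lm} K_{ijp}^m. Define T_{ijp} := T_{ij}^k g_{kp}, C_{ij}^p := g^{pk}(−T_{ikj} + T_{kji} − T_{jik}), M_{ij}^p := (1/2) g^{pk}(Q_{ikj} − Q_{kji} + Q_{jik}), W_{ij}^p := C_{ij}^p + M_{ij}^p, and W_{ijp} := W_{ij}^k g_{kp}. Let ∂̂ denote the covariant derivative with respect to Γ, so ∂̂_i W_{jpl} := ∂_i W_{jpl} − Γ^m_{ij} W_{mpl} − Γ^m_{ip} W_{jml} − Γ^m_{il} W_{jpm}. Then for all indices i,j,p,l and all points of Ω, R_{ijpl} = K_{ijpl} + (∂̂_i W_{jpl} − ∂̂_j W_{ipl}) + (W_{iml} W_{jp}^m − W_{jml}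 W_{ip}^m). -/

import Mathlib

noncomputable section

/-- Points of ℝ³. -/
abbrev E3 := Fin 3 → ℝ

/-- Partial derivative of `f` along the `j`-th coordinate at `x`. -/
def pd (f : E3 → ℝ) (j : Fin 3) (x : E3) : ℝ :=
  fderiv ℝ f x (Pi.single j 1)

/-- A connection coefficient field: `L x i j k = L^i_{jk}(x)`. -/
abbrev Conn := E3 → Fin 3 → Fin 3 → Fin 3 → ℝ

/-- Smoothness of a connection on `Ω`. -/
def ConnSmooth (L : Conn) (Ω : Set E3) : Prop :=
  ∀ i j k, ContDiffOn ℝ (⊤ : ℕ∞) (fun x => L x i j k) Ω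

/-- Torsion of a connection: `torsion L x i j k = T_{jk}^i = (1/2)(L^i_{jk} - L^i_{kj})`. -/
def torsion (L : Conn) (x : E3) (i j k : Fin 3) : ℝ :=
  (L x i j k - L x i k j) / 2

/-- Curvature of a connection: `curv L x p j i q = R_{jiq}^p`. -/
def curv (L : Conn) (x : E3) (p j i q : Fin 3) : ℝ :=
  pd (fun y => L y p i q) j x - pd (fun y => L y p j q) i x
    + ∑ h, (L x h i q * L x p j h - L x h j q * L x p i h)

/-- A metric field. -/
abbrev Metric := E3 → Matrix (Fin 3) (Fin 3) ℝ

/-- `g` is a metric on `Ω`: smooth entries, symmetric and positive definite on `Ω`. -/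
def MetricOn (g : Metric) (Ω : Set E3) : Prop :=
  (∀ i j, ContDiffOn ℝ (⊤ : ℕ∞) (fun x => g x i j) Ω) ∧
  (∀ x ∈ Ω, (g x).IsSymm) ∧ (∀ x ∈ Ω, (g x).PosDef)

/-- Non-metricity of `(L, g)`: `nm L g x k i j = Q_{kij}`. -/
def nm (L : Conn) (g : Metric) (x : E3) (k i j : Fin 3) : ℝ :=
  - pd (fun y => g y i j) k x + ∑ p, (L x p k j * g x i p + L x p k i * g x j p)

/-- Lowered curvature: `lcurv L g x i j k l = R_{ijkl} = g_{lp} R_{ijk}^p`. -/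
def lcurv (L : Conn) (g : Metric) (x : E3) (i j k l : Fin 3) : ℝ :=
  ∑ p, g x l p * curv L x p i j k

/-- Levi-Civita coefficients of `g`:
`Gamma g x p i j = Γ^p_{ij} = (1/2) g^{pn}(∂_j g_{ni} + ∂_i g_{nj} - ∂_n g_{ij})`. -/
def Gamma (g : Metric) (x : E3) (p i j : Fin 3) : ℝ :=
  (1 / 2) * ∑ n, (g x)⁻¹ p n *
    (pd (fun y => g y n i) j x + pd (fun y => g y n j) i x - pd (fun y => g y i j) n x)

/-- Lowered torsion `Tlow L g x i j p = T_{ijp} = T_{ij}^k g_{kp}`. -/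
def Tlow (L : Conn) (g : Metric) (x : E3) (i j p : Fin 3) : ℝ :=
  ∑ k, torsion L x k i j * g x k p

/-- Contortion `contortion L g x p i j = C_{ij}^p = g^{pk}(-T_{ikj} + T_{kji} - T_{jik})`. -/
def contortion (L : Conn) (g : Metric) (x : E3) (p i j : Fin 3) : ℝ :=
  ∑ k, (g x)⁻¹ p k *
    (-(Tlow L g x i k j) + Tlow L g x k j i - Tlow L g x j i k)

/-- Non-metricity part
`mten L g x p i j = M_{ij}^p = (1/2) g^{pk}(Q_{ikj} - Q_{kji} + Q_{jik})`. -/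
def mten (L : Conn) (g : Metric) (x : E3) (p i j : Fin 3) : ℝ :=
  (1 / 2) * ∑ k, (g x)⁻¹ p k *
    (nm L g x i k j - nm L g x k j i + nm L g x j i k)

/-- The Levi-Civita connection of `g` as a connection field. -/
def LC (g : Metric) : Conn := fun x p i j => Gamma g x p i j

/-- `Wup L g x p i j = W_{ij}^p = C_{ij}^p + M_{ij}^p`. -/
def Wup (L : Conn) (g : Metric) (x : E3) (p i j : Fin 3) : ℝ :=
  contortion L g x p i j + mten L g x p i j

/-- `Wlow L g x i j p = W_{ijp} = W_{ij}^k g_{kp}`. -/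
def Wlow (L : Conn) (g : Metric) (x : E3) (i j p : Fin 3) : ℝ :=
  ∑ k, Wup L g x k i j * g x k p

/-- Covariant derivative of `W` with respect to the Levi-Civita connection:
`hatD L g i j p l x = ∂̂_i W_{jpl}`. -/
def hatD (L : Conn) (g : Metric) (i j p l : Fin 3) (x : E3) : ℝ :=
  pd (fun y => Wlow L g y j p l) i x
    - ∑ m, (Gamma g x m i j * Wlow L g x m p l + Gamma g x m i p * Wlow L g x j m l
            + Gamma g x m i l * Wlow L g x j p m)

section Aux
open Filter in

lemma pd_add {f h : E3 → ℝ} {x : E3} (hf : DifferentiableAt ℝ f x)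
    (hh : DifferentiableAt ℝ h x) (j : Fin 3) :
    pd (fun y => f y + h y) j x = pd f j x + pd h j x := by
  simp [pd, fderiv_fun_add hf hh]

lemma pd_sub {f h : E3 → ℝ} {x : E3} (hf : DifferentiableAt ℝ f x)
    (hh : DifferentiableAt ℝ h x) (j : Fin 3) :
    pd (fun y => f y - h y) j x = pd f j x - pd h j x := by
  simp [pd, fderiv_fun_sub hf hh]

lemma pd_mul {f h : E3 → ℝ} {x : E3} (hf : DifferentiableAt ℝ f x)
    (hh : DifferentiableAt ℝ h x) (j : Fin 3) :
    pd (fun y => f y * h y) j x = f x * pd h j x + h x * pd f j x := by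
  simp [pd, fderiv_fun_mul hf hh]

lemma pd_congr {f h : E3 → ℝ} {x : E3} (hev : f =ᶠ[nhds x] h) (j : Fin 3) :
    pd f j x = pd h j x := by
  simp [pd, hev.fderiv_eq]

end Aux
section Aux2
variable {Ω : Set E3} {L : Conn} {g : Metric} {x : E3}

lemma gdiff (hΩ : IsOpen Ω) (hg : MetricOn g Ω) (hx : x ∈ Ω) (a b : Fin 3) :
    DifferentiableAt ℝ (fun y => g y a b) x :=
  ((hg.1 a b).contDiffAt (hΩ.mem_nhds hx)).differentiableAt (by simp)

lemma Ldiff (hΩ : IsOpen Ω) (hL : ConnSmooth L Ω) (hx : x ∈ Ω) (a b c : Fin 3) :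
    DifferentiableAt ℝ (fun y => L y a b c) x :=
  ((hL a b c).contDiffAt (hΩ.mem_nhds hx)).differentiableAt (by simp)

lemma pdgdiff (hΩ : IsOpen Ω) (hg : MetricOn g Ω) (hx : x ∈ Ω) (a b c : Fin 3) :
    DifferentiableAt ℝ (fun y => pd (fun z => g z a b) c y) x := by
  have h1 := (hg.1 a b).contDiffAt (hΩ.mem_nhds hx)
  have h2 := h1.fderiv_right (m := (⊤ : ℕ∞)) (by exact_mod_cast le_top)
  have h3 := h2.clm_apply (contDiffAt_const (c := (Pi.single c 1 : E3)))
  exact h3.differentiableAt (by simp)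

lemma detdiff (hΩ : IsOpen Ω) (hg : MetricOn g Ω) (hx : x ∈ Ω) :
    DifferentiableAt ℝ (fun y => (g y).det) x := by
  have h := gdiff hΩ hg hx
  simp only [Matrix.det_fin_three]
  exact (((((((h 0 0).mul (h 1 1)).mul (h 2 2)).sub
    (((h 0 0).mul (h 1 2)).mul (h 2 1))).sub
    (((h 0 1).mul (h 1 0)).mul (h 2 2))).add
    (((h 0 1).mul (h 1 2)).mul (h 2 0))).add
    (((h 0 2).mul (h 1 0)).mul (h 2 1))).sub
    (((h 0 2).mul (h 1 1)).mul (h 2 0))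

lemma ginvdiff (hΩ : IsOpen Ω) (hg : MetricOn g Ω) (hx : x ∈ Ω) (a b : Fin 3) :
    DifferentiableAt ℝ (fun y => (g y)⁻¹ a b) x := by
  have h := gdiff hΩ hg hx
  have hdet : (g x).det ≠ 0 := (hg.2.2 x hx).det_pos.ne'
  have heq : (fun y => (g y)⁻¹ a b) = fun y => (g y).det⁻¹ * (g y).adjugate a b := by
    funext y
    rw [Matrix.inv_def, Ring.inverse_eq_inv']
    simp [Matrix.smul_apply, smul_eq_mul]
  rw [heq]
  refine ((detdiff hΩ hg hx).inv hdet).mul ?_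
  fin_cases a <;> fin_cases b <;>
    simp only [Matrix.adjugate_fin_three, Fin.zero_eta, Fin.mk_one,
      show (⟨2, by norm_num⟩ : Fin 3) = 2 from rfl,
      Matrix.cons_val', Matrix.cons_val_zero, Matrix.cons_val_one, Matrix.cons_val_two,
      Matrix.head_cons, Matrix.vecTail, Matrix.vecHead, Matrix.empty_val', Matrix.cons_val_fin_one,
      Matrix.head_fin_const, Matrix.of_apply, Function.comp, Matrix.cons_val_succ,
      Fin.succ_zero_eq_one] <;>
    first
      | exact ((h _ _).mul (h _ _)).sub ((h _ _).mul (h _ _))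
      | exact (((h _ _).mul (h _ _)).neg).add ((h _ _).mul (h _ _))

lemma Gammadiff (hΩ : IsOpen Ω) (hg : MetricOn g Ω) (hx : x ∈ Ω) (p a b : Fin 3) :
    DifferentiableAt ℝ (fun y => Gamma g y p a b) x := by
  have hi := ginvdiff hΩ hg hx
  have hd := pdgdiff hΩ hg hx
  simp only [Gamma, Fin.sum_univ_three]
  exact ((((hi p 0).mul (((hd 0 a b).add (hd 0 b a)).sub (hd a b 0))).add
    ((hi p 1).mul (((hd 1 a b).add (hd 1 b a)).sub (hd a b 1)))).add
    ((hi p 2).mul (((hd 2 a b).add (hd 2 b a)).sub (hd a b 2)))).const_mul _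

end Aux2
section Aux3
variable {Ω : Set E3} {L : Conn} {g : Metric}

lemma pdg_symm (hΩ : IsOpen Ω) (hg : MetricOn g Ω) {y : E3} (hy : y ∈ Ω) (a b c : Fin 3) :
    pd (fun z => g z a b) c y = pd (fun z => g z b a) c y := by
  apply pd_congr
  filter_upwards [hΩ.mem_nhds hy] with z hz
  exact ((hg.2.1 z hz).apply a b).symm

lemma ginv_mul (hg : MetricOn g Ω) {y : E3} (hy : y ∈ Ω) (a b : Fin 3) :
    (∑ k, (g y)⁻¹ a k * g y k b) = if a = b then 1 else 0 := by
  have hdet : IsUnit (g y).det := isUnit_iff_ne_zero.2 (hg.2.2 y hy).det_pos.ne'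
  rw [← Matrix.mul_apply, Matrix.nonsing_inv_mul _ hdet, Matrix.one_apply]

lemma mul_ginv (hg : MetricOn g Ω) {y : E3} (hy : y ∈ Ω) (a b : Fin 3) :
    (∑ k, g y a k * (g y)⁻¹ k b) = if a = b then 1 else 0 := by
  have hdet : IsUnit (g y).det := isUnit_iff_ne_zero.2 (hg.2.2 y hy).det_pos.ne'
  rw [← Matrix.mul_apply, Matrix.mul_nonsing_inv _ hdet, Matrix.one_apply]

lemma wup_eq (hΩ : IsOpen Ω) (hg : MetricOn g Ω) {y : E3} (hy : y ∈ Ω) (p i j : Fin 3) :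
    Wup L g y p i j = L y p i j - Gamma g y p i j := by
  have hs : ∀ a b, g y a b = g y b a := fun a b => ((hg.2.1 y hy).apply b a)
  have hpd := pdg_symm hΩ hg hy
  have key : ∀ k, ((-(Tlow L g y i k j) + Tlow L g y k j i - Tlow L g y j i k)
      + (1/2) * (nm L g y i k j - nm L g y k j i + nm L g y j i k))
      = (∑ m, L y m i j * g y m k)
        - (1/2) * (pd (fun z => g z k i) j y + pd (fun z => g z k j) i y
            - pd (fun z => g z i j) k y) := by
    intro k
    simp only [Tlow, nm, torsion, Fin.sum_univ_three]
    rw [hpd j i k, hpd i k j]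
    simp only [hs i 0, hs i 1, hs i 2, hs j 0, hs j 1, hs j 2, hs k 0, hs k 1, hs k 2]
    ring
  have step1 : Wup L g y p i j = ∑ k, (g y)⁻¹ p k *
      ((-(Tlow L g y i k j) + Tlow L g y k j i - Tlow L g y j i k)
        + (1/2) * (nm L g y i k j - nm L g y k j i + nm L g y j i k)) := by
    simp only [Wup, contortion, mten, Finset.mul_sum, ← Finset.sum_add_distrib]
    apply Finset.sum_congr rfl; intro k _; ring
  rw [step1]
  have step2 : ∑ k, (g y)⁻¹ p k *
      ((-(Tlow L g y i k j) + Tlow L g y k j i - Tlow L g y j i k)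
        + (1/2) * (nm L g y i k j - nm L g y k j i + nm L g y j i k))
      = (∑ k, (g y)⁻¹ p k * ∑ m, L y m i j * g y m k) - Gamma g y p i j := by
    simp only [key]
    rw [Gamma, Finset.mul_sum, ← Finset.sum_sub_distrib]
    apply Finset.sum_congr rfl; intro k _; ring
  rw [step2]
  have hA : (∑ k, (g y)⁻¹ p k * ∑ m, L y m i j * g y m k) = L y p i j := by
    have h1 : (∑ k, (g y)⁻¹ p k * ∑ m, L y m i j * g y m k)
        = ∑ k, ∑ m, L y m i j * ((g y)⁻¹ p k * g y k m) := by
      apply Finset.sum_congr rfl; intro k _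
      rw [Finset.mul_sum]
      apply Finset.sum_congr rfl; intro m _
      rw [hs m k]; ring
    rw [h1, Finset.sum_comm]
    have h2 : ∀ m ∈ (Finset.univ : Finset (Fin 3)),
        (∑ k, L y m i j * ((g y)⁻¹ p k * g y k m)) = L y m i j * (if p = m then 1 else 0) := by
      intro m _
      rw [← Finset.mul_sum, ginv_mul hg hy]
    rw [Finset.sum_congr rfl h2]
    simp [mul_ite, mul_one, mul_zero, Finset.sum_ite_eq]
  rw [hA]
lemma Gamma_symm (hΩ : IsOpen Ω) (hg : MetricOn g Ω) {y : E3} (hy : y ∈ Ω) (h a b : Fin 3) :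
    Gamma g y h a b = Gamma g y h b a := by
  have hpd := pdg_symm hΩ hg hy
  simp only [Gamma]
  congr 1
  apply Finset.sum_congr rfl; intro n _
  rw [hpd b a n]; ring

lemma comp_eq (hΩ : IsOpen Ω) (hg : MetricOn g Ω) {y : E3} (hy : y ∈ Ω) (d a b : Fin 3) :
    pd (fun z => g z a b) d y
      = ∑ h, (Gamma g y h d a * g y h b + Gamma g y h d b * g y a h) := by
  have hs : ∀ u v, g y u v = g y v u := fun u v => ((hg.2.1 y hy).apply v u)
  have hpd := pdg_symm hΩ hg hy
  have key : ∀ (c : Fin 3), ∀ e : Fin 3, (∑ h, Gamma g y h d c * g y h e)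
      = (1/2) * (pd (fun z => g z e d) c y + pd (fun z => g z e c) d y
          - pd (fun z => g z d c) e y) := by
    intro c e
    have h1 : (∑ h, Gamma g y h d c * g y h e)
        = ∑ h, ∑ n, (1/2) * ((pd (fun z => g z n d) c y + pd (fun z => g z n c) d y
            - pd (fun z => g z d c) n y) * (g y e h * (g y)⁻¹ h n)) := by
      apply Finset.sum_congr rfl; intro h _
      simp only [Gamma, Finset.mul_sum, Finset.sum_mul]
      apply Finset.sum_congr rfl; intro n _
      rw [hs e h]; ring
    rw [h1, Finset.sum_comm]
    have h2 : ∀ n ∈ (Finset.univ : Finset (Fin 3)),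
        (∑ h, (1/2) * ((pd (fun z => g z n d) c y + pd (fun z => g z n c) d y
            - pd (fun z => g z d c) n y) * (g y e h * (g y)⁻¹ h n)))
        = (1/2) * ((pd (fun z => g z n d) c y + pd (fun z => g z n c) d y
            - pd (fun z => g z d c) n y) * (if e = n then 1 else 0)) := by
      intro n _
      rw [← Finset.mul_sum, ← Finset.mul_sum, mul_ginv hg hy]
    rw [Finset.sum_congr rfl h2]
    simp [mul_ite, mul_one, mul_zero, Finset.sum_ite_eq]
  rw [Finset.sum_add_distrib, key a b]
  have h3 : (∑ x, Gamma g y x d b * g y a x) = ∑ x, Gamma g y x d b * g y x a := by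
    apply Finset.sum_congr rfl; intro x _; rw [hs a x]
  rw [h3, key b a]
  rw [hpd b d a, hpd a d b, hpd b a d]
  ring
lemma pdWlow (hΩ : IsOpen Ω) (hg : MetricOn g Ω) (hL : ConnSmooth L Ω) {x : E3} (hx : x ∈ Ω)
    (a b c d : Fin 3) :
    pd (fun y => Wlow L g y a b c) d x
      = ∑ k, ((pd (fun y => L y k a b) d x - pd (fun y => Gamma g y k a b) d x) * g x k c
          + (L x k a b - Gamma g x k a b) * pd (fun y => g y k c) d x) := by
  have hLd := Ldiff hΩ hL hx
  have hGd := Gammadiff hΩ hg hx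
  have hgd := gdiff hΩ hg hx
  have hev : (fun y => Wlow L g y a b c) =ᶠ[nhds x]
      (fun y => (L y 0 a b - Gamma g y 0 a b) * g y 0 c
        + (L y 1 a b - Gamma g y 1 a b) * g y 1 c
        + (L y 2 a b - Gamma g y 2 a b) * g y 2 c) := by
    filter_upwards [hΩ.mem_nhds hx] with y hy
    simp only [Wlow, Fin.sum_univ_three, wup_eq hΩ hg hy]
  rw [pd_congr hev d]
  have D : ∀ k : Fin 3, DifferentiableAt ℝ (fun y => (L y k a b - Gamma g y k a b) * g y k c) x :=
    fun k => ((hLd k a b).sub (hGd k a b)).mul (hgd k c)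
  rw [pd_add ((D 0).fun_add (D 1)) (D 2), pd_add (D 0) (D 1),
    pd_mul ((hLd 0 a b).fun_sub (hGd 0 a b)) (hgd 0 c),
    pd_mul ((hLd 1 a b).fun_sub (hGd 1 a b)) (hgd 1 c),
    pd_mul ((hLd 2 a b).fun_sub (hGd 2 a b)) (hgd 2 c),
    pd_sub (hLd 0 a b) (hGd 0 a b), pd_sub (hLd 1 a b) (hGd 1 a b),
    pd_sub (hLd 2 a b) (hGd 2 a b)]
  simp only [Fin.sum_univ_three]
  ring

end Aux3

set_option maxHeartbeats 2000000


/-- Curvature of a connection relative to the Levi-Civita curvature: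
`R_{ijpl} = K_{ijpl} + (∂̂_i W_{jpl} - ∂̂_j W_{ipl}) + (W_{iml} W_{jp}^m - W_{jml} W_{ip}^m)`. -/
theorem curvature_relative_to_levi_civita
    (Ω : Set E3) (hΩ : IsOpen Ω) (hne : Ω.Nonempty)
    (L : Conn) (hL : ConnSmooth L Ω) (g : Metric) (hg : MetricOn g Ω) :
    ∀ x ∈ Ω, ∀ i j p l : Fin 3,
      lcurv L g x i j p l
        = lcurv (LC g) g x i j p l
          + (hatD L g i j p l x - hatD L g j i p l x)
          + ∑ m, (Wlow L g x i m l * Wup L g x m j p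
                  - Wlow L g x j m l * Wup L g x m i p) := by
  intro x hx i j p l
  have hW : ∀ a b c, Wup L g x a b c = L x a b c - Gamma g x a b c :=
    fun a b c => wup_eq hΩ hg hx a b c
  have hWl : ∀ a b c, Wlow L g x a b c = ∑ k, (L x k a b - Gamma g x k a b) * g x k c := by
    intro a b c; simp only [Wlow, hW]
  have hpdW := pdWlow hΩ hg hL hx
  have hcomp := comp_eq hΩ hg hx
  have hs : ∀ u v, g x u v = g x v u := fun u v => ((hg.2.1 x hx).apply v u)
  have hGs := Gamma_symm hΩ hg hx
  simp only [lcurv, curv, hatD, LC, hpdW, hWl, hW, hcomp]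
  simp only [Fin.sum_univ_three]
  simp only [hs l 0, hs l 1, hs l 2, hs 1 0, hs 2 0, hs 2 1,
    hGs 0 j i, hGs 1 j i, hGs 2 j i]
  ring
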